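/- Let (X,d) be a compact metric space and φ : X → X a continuous expanding map. Then the set of periodic points Per(φ) = {x ∈ X : φⁿ(x) = x for some n ≥ 1} has empty interior (i.e., φ is topologically free) if and only if no isolated point of X is periodic. -/

import Mathlib

/-- an expanding map of a compact metric space is topologically free (its set
of periodic points has empty interior) iff no isolated point of `X` is periodic. -/
theorem stmt18 {X : Type*} [MetricSpace X] [CompactSpace X]
    (φ : X → X) (hcont : Continuous φ)
    (hexp : ∃ ε > (0 : ℝ), ∃ θ > (1 : ℝ),
      ∀ x y : X, dist x y < ε → θ * dist x y ≤ dist (φ x) (φ y)) :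
    interior {x : X | ∃ n : ℕ, 1 ≤ n ∧ φ^[n] x = x} = ∅ ↔
      ∀ x : X, IsOpen ({x} : Set X) → ∀ n : ℕ, 1 ≤ n → φ^[n] x ≠ x := by
  obtain ⟨ε, hε, θ, hθ, hexp⟩ := hexp
  constructor
  · intro h x hx n hn hfix
    have hsub : ({x} : Set X) ⊆ {x : X | ∃ n : ℕ, 1 ≤ n ∧ φ^[n] x = x} := by
      rintro y rfl
      exact ⟨n, hn, hfix⟩
    have : ({x} : Set X) ⊆ interior {x : X | ∃ n : ℕ, 1 ≤ n ∧ φ^[n] x = x} :=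
      hx.subset_interior_iff.mpr hsub
    rw [h] at this
    exact this rfl
  · intro hiso
    -- each fixed-point set of φ^[n+1] is closed with empty interior
    set F : ℕ → Set X := fun n => {x : X | φ^[n+1] x = x} with hF
    have hclosed : ∀ n, IsClosed (F n) := fun n =>
      isClosed_eq (hcont.iterate (n+1)) continuous_id
    have hint : ∀ n, interior (F n) = ∅ := by
      intro n
      by_contra hne
      obtain ⟨x, hx⟩ := Set.nonempty_iff_ne_empty.mpr hne
      have hxF : x ∈ F n := interior_subset hx
      -- x is periodic hence not isolated
      have hnotiso : ¬ IsOpen ({x} : Set X) := fun ho =>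
        hiso x ho (n+1) (Nat.le_add_left 1 n) hxF
      -- neighborhood control
      have hev : ∀ᶠ y in nhds x, y ∈ F n ∧ ∀ j ∈ Finset.range (n+1),
          dist (φ^[j] y) (φ^[j] x) < ε := by
        refine Filter.Eventually.and ?_ ?_
        · exact mem_interior_iff_mem_nhds.mp hx
        · rw [Filter.eventually_all_finset]
          intro j _
          have : Filter.Tendsto (φ^[j]) (nhds x) (nhds (φ^[j] x)) :=
            (hcont.iterate j).continuousAt
          exact Metric.tendsto_nhds.mp this ε hε
      obtain ⟨δ, hδ, hball⟩ := Metric.eventually_nhds_iff_ball.mp hev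
      obtain ⟨y, hyδ, hyx⟩ : ∃ y, y ∈ Metric.ball x δ ∧ y ≠ x := by
        by_contra hcon
        push_neg at hcon
        apply hnotiso
        refine Metric.isOpen_iff.mpr ?_
        rintro z rfl
        exact ⟨δ, hδ, fun w hw => hcon w hw⟩
      obtain ⟨hyF, hdists⟩ := hball y hyδ
      have hd : 0 < dist y x := dist_pos.mpr hyx
      have key : ∀ j, j ≤ n + 1 → θ ^ j * dist y x ≤ dist (φ^[j] y) (φ^[j] x) := by
        intro j hj
        induction j with
        | zero => simp
        | succ k ih =>
          have hk : k ≤ n + 1 := Nat.le_of_succ_le hj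
          have ihk := ih hk
          have hklt : dist (φ^[k] y) (φ^[k] x) < ε :=
            hdists k (Finset.mem_range.mpr (Nat.lt_of_succ_le hj))
          have hstep := hexp _ _ hklt
          calc θ ^ (k+1) * dist y x = θ * (θ ^ k * dist y x) := by ring
            _ ≤ θ * dist (φ^[k] y) (φ^[k] x) :=
                mul_le_mul_of_nonneg_left ihk (by linarith)
            _ ≤ dist (φ (φ^[k] y)) (φ (φ^[k] x)) := hstep
            _ = dist (φ^[k+1] y) (φ^[k+1] x) := by
                rw [Function.iterate_succ_apply', Function.iterate_succ_apply']
      have hfin := key (n+1) le_rfl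
      rw [hyF, hxF] at hfin
      have hpow : (1:ℝ) < θ ^ (n+1) := one_lt_pow₀ hθ (Nat.succ_ne_zero n)
      nlinarith
    -- meagre argument
    have hmeagre : IsMeagre (⋃ n, F n) := by
      refine isMeagre_iUnion fun n => ?_
      have : IsOpen (F n)ᶜ ∧ Dense (F n)ᶜ := by
        rw [← isClosed_isNowhereDense_iff_compl]
        exact ⟨hclosed n, (hclosed n).isNowhereDense_iff.mpr (hint n)⟩
      exact residual_of_dense_open this.1 this.2
    have hsub : {x : X | ∃ n : ℕ, 1 ≤ n ∧ φ^[n] x = x} ⊆ ⋃ n, F n := by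
      rintro x ⟨n, hn, hfix⟩
      obtain ⟨m, rfl⟩ := Nat.exists_eq_add_of_le hn
      exact Set.mem_iUnion.mpr ⟨m, by simpa [hF, Nat.add_comm] using hfix⟩
    have := hmeagre.mono hsub
    rw [IsMeagre] at this
    rw [interior_eq_empty_iff_dense_compl]
    exact dense_of_mem_residual this
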